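/- Let ℓ ≥ 1 and a > a_1 ≥ a_2 ≥ … ≥ a_ℓ, and use in every reduced election with t nominees the scoring vector (a, …, a, a_1, a_2, …, a_ℓ) of length t. Let E be an election over candidate set C with party partition 𝒫 of size t = |𝒫|, let p ∈ P ∈ 𝒫, and let τ be the number of distinct preference orders occurring among the voters. If t > ℓτ, then p is a necessary president if and only if for every voter v it holds that |{P̃ ∈ 𝒫 \ {P} : there exists c ∈ P̃ with c ≻_v p}| < t − ℓ. -/

import Mathlib

open scoped Classical

noncomputable section

/-- Score of `c` in the reduced election over `C'` under the Veto-like scoring vector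
`(a, …, a, a_1, …, a_ℓ)`: a voter ranking `b` nominees below `c` contributes `a`
points if `b ≥ ℓ`, and `as b` points otherwise, where `as b = a_{ℓ−b}` (so `as 0` is
the last entry `a_ℓ` and `as (ℓ−1) = a_1`). -/
def vetoScore {C V : Type*} [Fintype V] (ℓ : ℕ) (a : ℤ) (as : ℕ → ℤ)
    (pref : V → C → C → Prop) (C' : Finset C) (c : C) : ℤ :=
  ∑ v : V,
    (if ℓ ≤ (C'.filter fun c' => pref v c c').card then a
     else as ((C'.filter fun c' => pref v c c').card))

/-- `C'` contains exactly one nominee of each party of `Ps`. -/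
def IsNomineeSet {C : Type*} (Ps : Finset (Finset C)) (C' : Finset C) : Prop :=
  ∀ Pt ∈ Ps, (C' ∩ Pt).card = 1

/-- `Ps` is a partition of the candidate set into nonempty parties. -/
def IsPartition {C : Type*} [Fintype C] (Ps : Finset (Finset C)) : Prop :=
  (∀ Pt ∈ Ps, Pt.Nonempty) ∧ ∀ c : C, ∃! Pt, Pt ∈ Ps ∧ c ∈ Pt

/-- `p` is a winner of every reduced election containing `p`, under the given
Veto-like scoring rule. -/
def NecessaryPresidentVeto {C V : Type*} [Fintype V] (ℓ : ℕ) (a : ℤ) (as : ℕ → ℤ)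
    (pref : V → C → C → Prop) (Ps : Finset (Finset C)) (p : C) : Prop :=
  ∀ C' : Finset C, IsNomineeSet Ps C' → p ∈ C' →
    ∀ c ∈ C', vetoScore ℓ a as pref C' c ≤ vetoScore ℓ a as pref C' p

section Helpers

variable {C : Type*} {r : C → C → Prop}

lemma below_lt (h : IsStrictTotalOrder C r) (C' : Finset C) {c c' : C}
    (hc' : c' ∈ C') (hcc' : r c c') :
    (C'.filter fun x => r c' x).card < (C'.filter fun x => r c x).card := by
  haveI := h
  have hsub : insert c' (C'.filter fun x => r c' x) ⊆ C'.filter fun x => r c x := by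
    intro x hx
    rcases Finset.mem_insert.1 hx with rfl | hx
    · exact Finset.mem_filter.2 ⟨hc', hcc'⟩
    · rcases Finset.mem_filter.1 hx with ⟨hx1, hx2⟩
      exact Finset.mem_filter.2 ⟨hx1, Trans.trans hcc' hx2⟩
  have hni : c' ∉ (C'.filter fun x => r c' x) := by
    simp [irrefl_of r c']
  calc (C'.filter fun x => r c' x).card
      < (insert c' (C'.filter fun x => r c' x)).card := by
        rw [Finset.card_insert_of_notMem hni]; omega
    _ ≤ _ := Finset.card_le_card hsub

lemma rank_injOn (h : IsStrictTotalOrder C r) (C' : Finset C) :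
    Set.InjOn (fun c => (C'.filter fun x => r c x).card) C' := by
  intro c hc c' hc' heq
  haveI := h
  simp only at heq
  by_contra hne
  rcases trichotomous_of r c c' with h1 | h1 | h1
  · have := below_lt h C' hc' h1; omega
  · exact hne h1
  · have := below_lt h C' hc h1; omega

lemma bad_card (h : IsStrictTotalOrder C r) (C' : Finset C) (ℓ : ℕ) :
    (C'.filter fun c => (C'.filter fun x => r c x).card < ℓ).card ≤ ℓ := by
  have := Finset.card_le_card_of_injOn (t := Finset.range ℓ)
    (fun c => (C'.filter fun x => r c x).card)
    (fun c hc => Finset.mem_range.2 (Finset.mem_filter.1 hc).2)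
    ((rank_injOn h C').mono (by intro x hx; exact Finset.mem_filter.1 hx |>.1))
  simpa using this

lemma split_card (h : IsStrictTotalOrder C r) {C' : Finset C} {p : C} (hp : p ∈ C') :
    (C'.filter fun x => r p x).card + (C'.filter fun x => r x p).card + 1 = C'.card := by
  haveI := h
  have hasymm : ∀ x y : C, r x y → r y x → False := fun x y h1 h2 =>
    irrefl_of r x (Trans.trans h1 h2)
  have e1 : C'.filter (fun x => ¬ r p x) = insert p (C'.filter fun x => r x p) := by
    ext x
    simp only [Finset.mem_filter, Finset.mem_insert]
    constructor
    · rintro ⟨hx, hnx⟩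
      rcases trichotomous_of r p x with h1 | h1 | h1
      · exact absurd h1 hnx
      · exact Or.inl h1.symm
      · exact Or.inr ⟨hx, h1⟩
    · rintro (rfl | ⟨hx, hxp⟩)
      · exact ⟨hp, irrefl_of r _⟩
      · exact ⟨hx, fun hpx => hasymm _ _ hpx hxp⟩
  have e2 : p ∉ (C'.filter fun x => r x p) := by simp [irrefl_of r p]
  have := Finset.card_filter_add_card_filter_not (s := C') (fun x => r p x)
  simp only [e1, Finset.card_insert_of_notMem e2] at this
  omega

/-- The nominee chosen from party `Pt`: `p` if `Pt = P`, otherwise a candidate of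
`Pt` preferred to `p` (w.r.t. `pref0`) if one exists, otherwise anyone. -/
def pick (pref0 : C → C → Prop) (P : Finset C) (p : C) (Pt : Finset C) : C :=
  if Pt = P then p
  else if h : (Pt.filter fun c => pref0 c p).Nonempty then h.choose
  else if h2 : Pt.Nonempty then h2.choose else p

lemma pick_mem (pref0 : C → C → Prop) {P Pt : Finset C} {p : C}
    (hp : p ∈ P) (hne : Pt.Nonempty) : pick pref0 P p Pt ∈ Pt := by
  unfold pick
  by_cases h1 : Pt = P
  · rw [if_pos h1]; exact h1 ▸ hp
  · rw [if_neg h1]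
    by_cases h2 : (Pt.filter fun c => pref0 c p).Nonempty
    · rw [dif_pos h2]; exact Finset.filter_subset _ _ h2.choose_spec
    · rw [dif_neg h2, dif_pos hne]; exact hne.choose_spec

lemma pick_pref (pref0 : C → C → Prop) {P Pt : Finset C} {p : C} (hne : Pt ≠ P)
    (h : ∃ c ∈ Pt, pref0 c p) : pref0 (pick pref0 P p Pt) p := by
  unfold pick
  rw [if_neg hne]
  have hfil : (Pt.filter fun c => pref0 c p).Nonempty := by
    obtain ⟨c, hc, hcp⟩ := h; exact ⟨c, Finset.mem_filter.2 ⟨hc, hcp⟩⟩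
  rw [dif_pos hfil]
  exact (Finset.mem_filter.1 hfil.choose_spec).2

lemma pick_self (pref0 : C → C → Prop) (P : Finset C) (p : C) :
    pick pref0 P p P = p := if_pos rfl

lemma nominee_card {C : Type*} [Fintype C] {Ps : Finset (Finset C)} {C' : Finset C}
    (hpart : IsPartition Ps) (hnom : IsNomineeSet Ps C') :
    C'.card = Ps.card := by
  have hC' : C' = Ps.biUnion (fun Pt => C' ∩ Pt) := by
    ext c
    simp only [Finset.mem_biUnion, Finset.mem_inter]
    constructor
    · intro hc
      obtain ⟨Pt, ⟨hPt, hcPt⟩, -⟩ := hpart.2 c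
      exact ⟨Pt, hPt, hc, hcPt⟩
    · rintro ⟨Pt, -, hc, -⟩; exact hc
  rw [hC', Finset.card_biUnion]
  · rw [Finset.sum_congr rfl hnom, Finset.sum_const, smul_eq_mul, mul_one]
  · intro P1 h1 P2 h2 hne
    rw [Function.onFun, Finset.disjoint_left]
    intro c hc1 hc2
    exact hne ((hpart.2 c).unique ⟨h1, (Finset.mem_inter.1 hc1).2⟩
      ⟨h2, (Finset.mem_inter.1 hc2).2⟩)

end Helpers

/-- for a Veto-like rule, if the number `t` of parties exceeds `ℓ·τ`,
then `p` is a necessary president iff for every voter `v`, fewer than `t − ℓ`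
parties other than `P` contain a candidate preferred to `p` by `v`. -/
theorem veto_necessary_president_iff_many_parties
    {C V : Type*} [Fintype C] [Fintype V]
    (ℓ : ℕ) (hℓ : 1 ≤ ℓ) (a : ℤ) (as : ℕ → ℤ)
    (hmono : ∀ i j : ℕ, i ≤ j → j < ℓ → as i ≤ as j)
    (htop : as (ℓ - 1) < a)
    (pref : V → C → C → Prop) (hpref : ∀ v : V, IsStrictTotalOrder C (pref v))
    (Ps : Finset (Finset C)) (hpart : IsPartition Ps)
    (P : Finset C) (hP : P ∈ Ps) (p : C) (hp : p ∈ P)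
    (hτ : ℓ * (Finset.univ.image fun v : V => pref v).card < Ps.card) :
    NecessaryPresidentVeto ℓ a as pref Ps p ↔
      ∀ v : V,
        ((Ps \ {P}).filter fun Pt => ∃ c ∈ Pt, pref v c p).card < Ps.card - ℓ := by
  constructor
  · -- necessary president → condition; by contradiction
    intro hnec v
    by_contra hcon
    push_neg at hcon
    have hτ1 : 1 ≤ (Finset.univ.image fun v : V => pref v).card :=
      Finset.card_pos.2 ⟨pref v, Finset.mem_image.2 ⟨v, Finset.mem_univ v, rfl⟩⟩
    have hℓt : ℓ < Ps.card :=
      lt_of_le_of_lt (Nat.le_mul_of_pos_right ℓ hτ1) hτ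
    -- construct the reduced election
    set C' : Finset C := Ps.image (pick (pref v) P p) with hC'def
    have hpickmem : ∀ Pt ∈ Ps, pick (pref v) P p Pt ∈ Pt := fun Pt hPt =>
      pick_mem _ hp (hpart.1 Pt hPt)
    have hnomC' : IsNomineeSet Ps C' := by
      intro Pt hPt
      have hEq : C' ∩ Pt = {pick (pref v) P p Pt} := by
        apply Finset.Subset.antisymm
        · intro x hx
          rcases Finset.mem_inter.1 hx with ⟨hx1, hx2⟩
          obtain ⟨Pt', hPt', rfl⟩ := Finset.mem_image.1 hx1
          have hPtPt' : Pt' = Pt :=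
            (hpart.2 _).unique ⟨hPt', hpickmem Pt' hPt'⟩ ⟨hPt, hx2⟩
          rw [hPtPt']
          exact Finset.mem_singleton_self _
        · rw [Finset.singleton_subset_iff, Finset.mem_inter]
          exact ⟨Finset.mem_image.2 ⟨Pt, hPt, rfl⟩, hpickmem Pt hPt⟩
      rw [hEq, Finset.card_singleton]
    have hpC' : p ∈ C' := by
      rw [hC'def]
      exact Finset.mem_image.2 ⟨P, hP, pick_self _ _ _⟩
    have hcardC' : C'.card = Ps.card := nominee_card hpart hnomC'
    -- p is ranked low by v in C'
    have habove : Ps.card - ℓ ≤ (C'.filter fun x => pref v x p).card := by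
      refine le_trans hcon (Finset.card_le_card_of_injOn (pick (pref v) P p) ?_ ?_)
      · intro Pt hPt
        rcases Finset.mem_filter.1 hPt with ⟨hPt1, hPt2⟩
        rcases Finset.mem_sdiff.1 hPt1 with ⟨hPt3, hPt4⟩
        refine Finset.mem_filter.2 ⟨Finset.mem_image.2 ⟨Pt, hPt3, rfl⟩, ?_⟩
        exact pick_pref _ (by simpa using hPt4) hPt2
      · intro P1 h1 P2 h2 hEq
        have h1' : P1 ∈ Ps :=
          (Finset.mem_sdiff.1 (Finset.mem_filter.1 h1).1).1
        have h2' : P2 ∈ Ps :=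
          (Finset.mem_sdiff.1 (Finset.mem_filter.1 h2).1).1
        exact (hpart.2 (pick (pref v) P p P1)).unique ⟨h1', hpickmem P1 h1'⟩
          ⟨h2', hEq ▸ hpickmem P2 h2'⟩
    have hsplit := split_card (hpref v) hpC'
    have hbelow : (C'.filter fun x => pref v p x).card < ℓ := by omega
    -- a candidate never in the bottom ℓ
    set T := (Finset.univ.image fun w : V => pref w) with hT
    set Bad := T.biUnion
      (fun q => C'.filter fun c => (C'.filter fun x => q c x).card < ℓ) with hBadDef
    have hBadsub : Bad ⊆ C' := by
      intro x hx
      obtain ⟨q, -, hx2⟩ := Finset.mem_biUnion.1 hx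
      exact (Finset.mem_filter.1 hx2).1
    have hBadcard : Bad.card < C'.card := by
      have h1 : Bad.card ≤ T.card * ℓ := by
        calc Bad.card
            ≤ ∑ q ∈ T, (C'.filter fun c => (C'.filter fun x => q c x).card < ℓ).card :=
              Finset.card_biUnion_le
          _ ≤ ∑ _q ∈ T, ℓ := Finset.sum_le_sum (fun q hq => by
              obtain ⟨w, -, rfl⟩ := Finset.mem_image.1 hq
              exact bad_card (hpref w) C' ℓ)
          _ = T.card * ℓ := by rw [Finset.sum_const, smul_eq_mul]
      have h2 : ℓ * T.card < Ps.card := hτ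
      rw [Nat.mul_comm] at h1
      rw [hcardC']
      omega
    have hgoodex : ∃ c ∈ C', c ∉ Bad := by
      have : (C' \ Bad).Nonempty := by
        rw [← Finset.card_pos, Finset.card_sdiff_of_subset hBadsub]
        omega
      obtain ⟨c, hc⟩ := this
      exact ⟨c, (Finset.mem_sdiff.1 hc).1, (Finset.mem_sdiff.1 hc).2⟩
    obtain ⟨c, hcC', hcBad⟩ := hgoodex
    have hgood : ∀ w : V, ℓ ≤ (C'.filter fun x => pref w c x).card := by
      intro w
      by_contra hcontra
      push_neg at hcontra
      exact hcBad (Finset.mem_biUnion.2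
        ⟨pref w, Finset.mem_image.2 ⟨w, Finset.mem_univ w, rfl⟩,
          Finset.mem_filter.2 ⟨hcC', hcontra⟩⟩)
    have hscore : vetoScore ℓ a as pref C' p < vetoScore ℓ a as pref C' c := by
      unfold vetoScore
      apply Finset.sum_lt_sum
      · intro w _
        rw [if_pos (hgood w)]
        split_ifs with hw
        · exact le_refl a
        · push_neg at hw
          exact le_of_lt (lt_of_le_of_lt (hmono _ (ℓ - 1) (by omega) (by omega)) htop)
      · refine ⟨v, Finset.mem_univ v, ?_⟩
        rw [if_pos (hgood v), if_neg (not_le.2 hbelow)]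
        exact lt_of_le_of_lt (hmono _ (ℓ - 1) (by omega) (by omega)) htop
    exact absurd (hnec C' hnomC' hpC' c hcC') (not_le.2 hscore)
  · -- condition → necessary president
    intro hcond C' hnom hpC' c hc
    have hcardC' : C'.card = Ps.card := nominee_card hpart hnom
    have hPp : C' ∩ P = {p} := by
      obtain ⟨x, hx⟩ := Finset.card_eq_one.1 (hnom P hP)
      have hpx : p ∈ C' ∩ P := Finset.mem_inter.2 ⟨hpC', hp⟩
      rw [hx] at hpx ⊢
      rw [Finset.mem_singleton] at hpx
      rw [hpx]
    unfold vetoScore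
    apply Finset.sum_le_sum
    intro v _
    have habove : (C'.filter fun x => pref v x p).card ≤
        ((Ps \ {P}).filter fun Pt => ∃ c ∈ Pt, pref v c p).card := by
      apply Finset.card_le_card_of_injOn (fun x => (hpart.2 x).choose)
      · intro x hx
        rcases Finset.mem_filter.1 hx with ⟨hx1, hx2⟩
        obtain ⟨hPs, hxmem⟩ := (hpart.2 x).choose_spec.1
        have hneP : (hpart.2 x).choose ≠ P := by
          intro hEq
          have : x ∈ C' ∩ P := Finset.mem_inter.2 ⟨hx1, hEq ▸ hxmem⟩
          rw [hPp, Finset.mem_singleton] at this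
          exact irrefl_of (pref v) p (this ▸ hx2)
        exact Finset.mem_filter.2
          ⟨Finset.mem_sdiff.2 ⟨hPs, by simpa using hneP⟩, x, hxmem, hx2⟩
      · intro x1 hx1 x2 hx2 hEq
        have hm1 := (hpart.2 x1).choose_spec.1
        have hm2 := (hpart.2 x2).choose_spec.1
        have hcard1 := hnom _ hm1.1
        have hx1C := (Finset.mem_filter.1 hx1).1
        have hx2C := (Finset.mem_filter.1 hx2).1
        apply Finset.card_le_one.1 (le_of_eq hcard1)
        · exact Finset.mem_inter.2 ⟨hx1C, hm1.2⟩
        · exact Finset.mem_inter.2 ⟨hx2C, by dsimp only at hEq; rw [hEq]; exact hm2.2⟩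
    have hv := hcond v
    have hsplit := split_card (hpref v) hpC'
    have hbelow : ℓ ≤ (C'.filter fun x => pref v p x).card := by omega
    rw [if_pos hbelow]
    split_ifs with h1
    · exact le_refl a
    · push_neg at h1
      exact le_of_lt (lt_of_le_of_lt (hmono _ (ℓ - 1) (by omega) (by omega)) htop)
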